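/- arXiv:1007.2301 — 4 statements merged into one kernel-verified Lean document; each statement's English description precedes it below -/
import Mathlib

section
/- The union of the images M1(P) ∪ M2(P) ∪ ... ∪ M6(P) equals P, i.e., every point of P has a preimage in P under at least one of the Mi. -/
open Matrix Real

noncomputable section

def M1 : Matrix (Fin 3) (Fin 3) ℝ := !![1/2,0,0; 1/2,1/2,0; 0,1/2,1]
def M2 : Matrix (Fin 3) (Fin 3) ℝ := !![1/2,1/2,0; 0,1/2,0; 1/2,0,1]
def M3 : Matrix (Fin 3) (Fin 3) ℝ := !![1,0,1/2; 0,1/2,0; 0,1/2,1/2]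
def M4 : Matrix (Fin 3) (Fin 3) ℝ := !![1,1/2,0; 0,1/2,1/2; 0,0,1/2]
def M5 : Matrix (Fin 3) (Fin 3) ℝ := !![1/2,0,1/2; 1/2,1,0; 0,0,1/2]
def M6 : Matrix (Fin 3) (Fin 3) ℝ := !![1/2,0,0; 0,1,1/2; 1/2,0,1/2]

def Ms : Fin 6 → Matrix (Fin 3) (Fin 3) ℝ := ![M1, M2, M3, M4, M5, M6]

/-- The simplex of angle triples of (possibly degenerate) triangles. -/
def P : Set (EuclideanSpace ℝ (Fin 3)) :=
  {v | 0 ≤ v 0 ∧ 0 ≤ v 1 ∧ 0 ≤ v 2 ∧ v 0 + v 1 + v 2 = π}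

/-- Apply a matrix to a point of Euclidean 3-space. -/
def app (M : Matrix (Fin 3) (Fin 3) ℝ) (v : EuclideanSpace ℝ (Fin 3)) :
    EuclideanSpace ℝ (Fin 3) := WithLp.toLp 2 (M.mulVec v)

/-- A point of Euclidean 3-space from coordinates. -/
def vec (a b c : ℝ) : EuclideanSpace ℝ (Fin 3) := WithLp.toLp 2 ![a, b, c]

lemma mem_aux (i : Fin 6) (a b c : ℝ) (ha : 0 ≤ a) (hb : 0 ≤ b) (hc : 0 ≤ c)
    (v : EuclideanSpace ℝ (Fin 3)) (hsum : a + b + c = π)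
    (h : app (Ms i) (vec a b c) = v) :
    v ∈ ⋃ j : Fin 6, app (Ms j) '' P :=
  Set.mem_iUnion.2 ⟨i, vec a b c, ⟨ha, hb, hc, hsum⟩, h⟩

theorem stmt4 : (⋃ i : Fin 6, app (Ms i) '' P) = P := by
  apply subset_antisymm
  · rintro x hx
    rw [Set.mem_iUnion] at hx
    obtain ⟨i, w, ⟨h0, h1, h2, hs⟩, rfl⟩ := hx
    fin_cases i
    · show app M1 w ∈ P
      refine ⟨?_, ?_, ?_, ?_⟩ <;>
        simp [app, M1, P, Matrix.mulVec, dotProduct, Fin.sum_univ_three] <;> linarith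
    · show app M2 w ∈ P
      refine ⟨?_, ?_, ?_, ?_⟩ <;>
        simp [app, M2, P, Matrix.mulVec, dotProduct, Fin.sum_univ_three] <;> linarith
    · show app M3 w ∈ P
      refine ⟨?_, ?_, ?_, ?_⟩ <;>
        simp [app, M3, P, Matrix.mulVec, dotProduct, Fin.sum_univ_three] <;> linarith
    · show app M4 w ∈ P
      refine ⟨?_, ?_, ?_, ?_⟩ <;>
        simp [app, M4, P, Matrix.mulVec, dotProduct, Fin.sum_univ_three] <;> linarith
    · show app M5 w ∈ P
      refine ⟨?_, ?_, ?_, ?_⟩ <;>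
        simp [app, M5, P, Matrix.mulVec, dotProduct, Fin.sum_univ_three] <;> linarith
    · show app M6 w ∈ P
      refine ⟨?_, ?_, ?_, ?_⟩ <;>
        simp [app, M6, P, Matrix.mulVec, dotProduct, Fin.sum_univ_three] <;> linarith
  · rintro v ⟨h0, h1, h2, hs⟩
    rcases le_total (v 0) (v 1) with h01 | h01 <;>
      rcases le_total (v 1) (v 2) with h12 | h12 <;>
      rcases le_total (v 0) (v 2) with h02 | h02
    · rcases le_total (v 2) (v 0 + v 1) with ht | ht
      · exact mem_aux 2 (v 0 + v 1 - v 2) (2 * v 1) (2 * v 2 - 2 * v 1)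
          (by linarith) (by linarith) (by linarith) v (by linarith)
          (by show app M3 (vec _ _ _) = v
              ext j; fin_cases j <;>
                simp [app, M3, _root_.vec, Matrix.mulVec, dotProduct, Fin.sum_univ_three] <;> ring)
      · exact mem_aux 0 (2 * v 0) (2 * v 1 - 2 * v 0) (v 0 - v 1 + v 2)
          (by linarith) (by linarith) (by linarith) v (by linarith)
          (by show app M1 (vec _ _ _) = v
              ext j; fin_cases j <;>
                simp [app, M1, _root_.vec, Matrix.mulVec, dotProduct, Fin.sum_univ_three] <;> ring)
    · exact mem_aux 2 (v 0 + v 1 - v 2) (2 * v 1) (2 * v 2 - 2 * v 1)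
        (by linarith) (by linarith) (by linarith) v (by linarith)
        (by show app M3 (vec _ _ _) = v
            ext j; fin_cases j <;>
              simp [app, M3, _root_.vec, Matrix.mulVec, dotProduct, Fin.sum_univ_three] <;> ring)
    · rcases le_total (v 1) (v 0 + v 2) with ht | ht
      · exact mem_aux 0 (2 * v 0) (2 * v 1 - 2 * v 0) (v 0 - v 1 + v 2)
          (by linarith) (by linarith) (by linarith) v (by linarith)
          (by show app M1 (vec _ _ _) = v
              ext j; fin_cases j <;>
                simp [app, M1, _root_.vec, Matrix.mulVec, dotProduct, Fin.sum_univ_three] <;> ring)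
      · exact mem_aux 5 (2 * v 0) (v 0 + v 1 - v 2) (2 * v 2 - 2 * v 0)
          (by linarith) (by linarith) (by linarith) v (by linarith)
          (by show app M6 (vec _ _ _) = v
              ext j; fin_cases j <;>
                simp [app, M6, _root_.vec, Matrix.mulVec, dotProduct, Fin.sum_univ_three] <;> ring)
    · rcases le_total (v 1) (v 0 + v 2) with ht | ht
      · exact mem_aux 0 (2 * v 0) (2 * v 1 - 2 * v 0) (v 0 - v 1 + v 2)
          (by linarith) (by linarith) (by linarith) v (by linarith)
          (by show app M1 (vec _ _ _) = v
              ext j; fin_cases j <;>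
                simp [app, M1, _root_.vec, Matrix.mulVec, dotProduct, Fin.sum_univ_three] <;> ring)
      · exact mem_aux 4 (2 * v 0 - 2 * v 2) (v 1 - v 0 + v 2) (2 * v 2)
          (by linarith) (by linarith) (by linarith) v (by linarith)
          (by show app M5 (vec _ _ _) = v
              ext j; fin_cases j <;>
                simp [app, M5, _root_.vec, Matrix.mulVec, dotProduct, Fin.sum_univ_three] <;> ring)
    · rcases le_total (v 2) (v 0 + v 1) with ht | ht
      · exact mem_aux 2 (v 0 + v 1 - v 2) (2 * v 1) (2 * v 2 - 2 * v 1)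
          (by linarith) (by linarith) (by linarith) v (by linarith)
          (by show app M3 (vec _ _ _) = v
              ext j; fin_cases j <;>
                simp [app, M3, _root_.vec, Matrix.mulVec, dotProduct, Fin.sum_univ_three] <;> ring)
      · exact mem_aux 1 (2 * v 0 - 2 * v 1) (2 * v 1) (v 1 - v 0 + v 2)
          (by linarith) (by linarith) (by linarith) v (by linarith)
          (by show app M2 (vec _ _ _) = v
              ext j; fin_cases j <;>
                simp [app, M2, _root_.vec, Matrix.mulVec, dotProduct, Fin.sum_univ_three] <;> ring)
    · rcases le_total (v 0) (v 1 + v 2) with ht | ht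
      · exact mem_aux 1 (2 * v 0 - 2 * v 1) (2 * v 1) (v 1 - v 0 + v 2)
          (by linarith) (by linarith) (by linarith) v (by linarith)
          (by show app M2 (vec _ _ _) = v
              ext j; fin_cases j <;>
                simp [app, M2, _root_.vec, Matrix.mulVec, dotProduct, Fin.sum_univ_three] <;> ring)
      · exact mem_aux 2 (v 0 + v 1 - v 2) (2 * v 1) (2 * v 2 - 2 * v 1)
          (by linarith) (by linarith) (by linarith) v (by linarith)
          (by show app M3 (vec _ _ _) = v
              ext j; fin_cases j <;>
                simp [app, M3, _root_.vec, Matrix.mulVec, dotProduct, Fin.sum_univ_three] <;> ring)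
    · exact mem_aux 1 (2 * v 0 - 2 * v 1) (2 * v 1) (v 1 - v 0 + v 2)
        (by linarith) (by linarith) (by linarith) v (by linarith)
        (by show app M2 (vec _ _ _) = v
            ext j; fin_cases j <;>
              simp [app, M2, _root_.vec, Matrix.mulVec, dotProduct, Fin.sum_univ_three] <;> ring)
    · rcases le_total (v 0) (v 1 + v 2) with ht | ht
      · exact mem_aux 1 (2 * v 0 - 2 * v 1) (2 * v 1) (v 1 - v 0 + v 2)
          (by linarith) (by linarith) (by linarith) v (by linarith)
          (by show app M2 (vec _ _ _) = v
              ext j; fin_cases j <;>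
                simp [app, M2, _root_.vec, Matrix.mulVec, dotProduct, Fin.sum_univ_three] <;> ring)
      · exact mem_aux 3 (v 0 - v 1 + v 2) (2 * v 1 - 2 * v 2) (2 * v 2)
          (by linarith) (by linarith) (by linarith) v (by linarith)
          (by show app M4 (vec _ _ _) = v
              ext j; fin_cases j <;>
                simp [app, M4, _root_.vec, Matrix.mulVec, dotProduct, Fin.sum_univ_three] <;> ring)
end
end

section
/- For any vectors t, s in the hyperplane {(x,y,z) ∈ ℝ³ : x+y+z = c} (same c), the matrix M1 = [[1/2,0,0],[1/2,1/2,0],[0,1/2,1]] satisfies ‖M1(t−s)‖ ≤ (√3/2)·‖t−s‖, where ‖·‖ is the Euclidean norm on ℝ³. -/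
open Matrix Real

noncomputable section

theorem stmt5 (c : ℝ) (t s : EuclideanSpace ℝ (Fin 3))
    (ht : t 0 + t 1 + t 2 = c) (hs : s 0 + s 1 + s 2 = c) :
    ‖app M1 (t - s)‖ ≤ (Real.sqrt 3 / 2) * ‖t - s‖ := by
  set d : EuclideanSpace ℝ (Fin 3) := t - s with hd
  have hz : d 0 + d 1 + d 2 = 0 := by
    simp only [hd, PiLp.sub_apply]
    linarith
  have h2 : ‖app M1 d‖ ^ 2 ≤ (Real.sqrt 3 / 2 * ‖d‖) ^ 2 := by
    rw [mul_pow, div_pow, Real.sq_sqrt (by norm_num : (3:ℝ) ≥ 0)]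
    rw [EuclideanSpace.norm_eq, EuclideanSpace.norm_eq,
      Real.sq_sqrt (by positivity), Real.sq_sqrt (by positivity)]
    simp only [app, M1, Fin.sum_univ_three, Matrix.mulVec, dotProduct, WithLp.ofLp_toLp,
      Matrix.cons_val', Matrix.cons_val_zero, Matrix.cons_val_one, Matrix.head_cons,
      Matrix.empty_val', Matrix.cons_val_fin_one, Matrix.head_fin_const,
      Matrix.cons_val_two, Matrix.tail_cons, Matrix.of_apply, Real.norm_eq_abs, sq_abs]
    have hd2 : d 2 = -d 0 - d 1 := by linarith
    rw [hd2]
    nlinarith [sq_nonneg (d 1)]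
  calc ‖app M1 d‖ = Real.sqrt (‖app M1 d‖ ^ 2) := (Real.sqrt_sq (norm_nonneg _)).symm
    _ ≤ Real.sqrt ((Real.sqrt 3 / 2 * ‖d‖) ^ 2) := Real.sqrt_le_sqrt h2
    _ = Real.sqrt 3 / 2 * ‖d‖ := Real.sqrt_sq (by positivity)
end
end

section
/- Each of the six matrices M1,...,M6 is a contraction with Lipschitz constant √3/2 on the hyperplane {x+y+z = π}: for all t, s in that hyperplane, ‖Mi t − Mi s‖ ≤ (√3/2)‖t−s‖. -/
open Matrix Real

noncomputable section

lemma key_contract (M : Matrix (Fin 3) (Fin 3) ℝ) (t s : EuclideanSpace ℝ (Fin 3))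
    (ht : t 0 + t 1 + t 2 = π) (hs : s 0 + s 1 + s 2 = π)
    (h : ∀ w : Fin 3 → ℝ, w 2 = -(w 0 + w 1) →
      (M.mulVec w 0) ^ 2 + (M.mulVec w 1) ^ 2 + (M.mulVec w 2) ^ 2
        ≤ 3 / 4 * (w 0 ^ 2 + w 1 ^ 2 + w 2 ^ 2)) :
    ‖app M t - app M s‖ ≤ (Real.sqrt 3 / 2) * ‖t - s‖ := by
  have happ : app M t - app M s = app M (t - s) := by simp [app, Matrix.mulVec_sub]
  rw [happ]
  set v : EuclideanSpace ℝ (Fin 3) := t - s with hv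
  have hv0 : v 0 = t 0 - s 0 := rfl
  have hv1 : v 1 = t 1 - s 1 := rfl
  have hv2' : v 2 = t 2 - s 2 := rfl
  have hv2 : v 2 = -(v 0 + v 1) := by rw [hv0, hv1, hv2']; linarith
  have hnorm : ∀ w : EuclideanSpace ℝ (Fin 3),
      ‖w‖ = Real.sqrt (w 0 ^ 2 + w 1 ^ 2 + w 2 ^ 2) := by
    intro w
    rw [EuclideanSpace.norm_eq]
    simp [Fin.sum_univ_three, sq_abs]
  rw [hnorm, hnorm]
  have h34 : Real.sqrt 3 / 2 = Real.sqrt (3 / 4) := by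
    rw [show (3:ℝ)/4 = 3 * (1/2)^2 by norm_num, Real.sqrt_mul (by norm_num),
      Real.sqrt_sq (by norm_num)]
    ring
  rw [h34, ← Real.sqrt_mul (by norm_num)]
  exact Real.sqrt_le_sqrt (by have := h v hv2; unfold app; exact this)

theorem stmt7 (i : Fin 6) (t s : EuclideanSpace ℝ (Fin 3))
    (ht : t 0 + t 1 + t 2 = π) (hs : s 0 + s 1 + s 2 = π) :
    ‖app (Ms i) t - app (Ms i) s‖ ≤ (Real.sqrt 3 / 2) * ‖t - s‖ := by
  fin_cases i
  · exact key_contract M1 t s ht hs (by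
      intro w hw
      simp only [M1, Matrix.mulVec, dotProduct, Fin.sum_univ_three,
        Matrix.cons_val', Matrix.cons_val_zero, Matrix.cons_val_one,
        Matrix.head_cons, Matrix.empty_val', Matrix.cons_val_fin_one,
        Matrix.cons_val_two, Matrix.tail_cons, Matrix.of_apply, Matrix.head_fin_const]
      rw [hw]
      nlinarith [sq_nonneg (w 0), sq_nonneg (w 1), sq_nonneg (w 0 + w 1)])
  · exact key_contract M2 t s ht hs (by
      intro w hw
      simp only [M2, Matrix.mulVec, dotProduct, Fin.sum_univ_three,
        Matrix.cons_val', Matrix.cons_val_zero, Matrix.cons_val_one,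
        Matrix.head_cons, Matrix.empty_val', Matrix.cons_val_fin_one,
        Matrix.cons_val_two, Matrix.tail_cons, Matrix.of_apply, Matrix.head_fin_const]
      rw [hw]
      nlinarith [sq_nonneg (w 0), sq_nonneg (w 1), sq_nonneg (w 0 + w 1)])
  · exact key_contract M3 t s ht hs (by
      intro w hw
      simp only [M3, Matrix.mulVec, dotProduct, Fin.sum_univ_three,
        Matrix.cons_val', Matrix.cons_val_zero, Matrix.cons_val_one,
        Matrix.head_cons, Matrix.empty_val', Matrix.cons_val_fin_one,
        Matrix.cons_val_two, Matrix.tail_cons, Matrix.of_apply, Matrix.head_fin_const]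
      rw [hw]
      nlinarith [sq_nonneg (w 0), sq_nonneg (w 1), sq_nonneg (w 0 + w 1)])
  · exact key_contract M4 t s ht hs (by
      intro w hw
      simp only [M4, Matrix.mulVec, dotProduct, Fin.sum_univ_three,
        Matrix.cons_val', Matrix.cons_val_zero, Matrix.cons_val_one,
        Matrix.head_cons, Matrix.empty_val', Matrix.cons_val_fin_one,
        Matrix.cons_val_two, Matrix.tail_cons, Matrix.of_apply, Matrix.head_fin_const]
      rw [hw]
      nlinarith [sq_nonneg (w 0), sq_nonneg (w 1), sq_nonneg (w 0 + w 1)])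
  · exact key_contract M5 t s ht hs (by
      intro w hw
      simp only [M5, Matrix.mulVec, dotProduct, Fin.sum_univ_three,
        Matrix.cons_val', Matrix.cons_val_zero, Matrix.cons_val_one,
        Matrix.head_cons, Matrix.empty_val', Matrix.cons_val_fin_one,
        Matrix.cons_val_two, Matrix.tail_cons, Matrix.of_apply, Matrix.head_fin_const]
      rw [hw]
      nlinarith [sq_nonneg (w 0), sq_nonneg (w 1), sq_nonneg (w 0 + w 1)])
  · exact key_contract M6 t s ht hs (by
      intro w hw
      simp only [M6, Matrix.mulVec, dotProduct, Fin.sum_univ_three,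
        Matrix.cons_val', Matrix.cons_val_zero, Matrix.cons_val_one,
        Matrix.head_cons, Matrix.empty_val', Matrix.cons_val_fin_one,
        Matrix.cons_val_two, Matrix.tail_cons, Matrix.of_apply, Matrix.head_fin_const]
      rw [hw]
      nlinarith [sq_nonneg (w 0), sq_nonneg (w 1), sq_nonneg (w 0 + w 1)])
end
end

section
/- Density theorem for incenter subdivision: for any q ∈ P, any t ∈ P, and any ε > 0, there exists a finite sequence i₁,...,i_k ∈ {1,...,6} such that ‖M_{i₁}M_{i₂}···M_{i_k}·q − t‖ < ε. That is, the orbit of any point of P under all finite products of M1,...,M6 is dense in P. -/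
open Matrix Real

noncomputable section

lemma cons_val_five {α : Type*} (a b c d e f : α) : ![a,b,c,d,e,f] 5 = f := rfl

lemma evec_ext (x y : EuclideanSpace ℝ (Fin 3)) (h0 : x 0 = y 0) (h1 : x 1 = y 1)
    (h2 : x 2 = y 2) : x = y := PiLp.ext fun j => by fin_cases j <;> assumption

lemma normsq (x : EuclideanSpace ℝ (Fin 3)) : ‖x‖^2 = (x 0)^2 + (x 1)^2 + (x 2)^2 := by
  rw [EuclideanSpace.norm_eq, Real.sq_sqrt (by positivity)]
  simp [Fin.sum_univ_three, sq_abs]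

lemma sumzero (i : Fin 6) (v : EuclideanSpace ℝ (Fin 3)) (hv : v 0 + v 1 + v 2 = 0) :
    app (Ms i) v 0 + app (Ms i) v 1 + app (Ms i) v 2 = 0 := by
  fin_cases i <;>
    simp [app, Ms, M1, M2, M3, M4, M5, M6, Matrix.mulVec, dotProduct,
      Fin.sum_univ_three, cons_val_five] <;> linarith

lemma contr (i : Fin 6) (v : EuclideanSpace ℝ (Fin 3)) (hv : v 0 + v 1 + v 2 = 0) :
    ‖app (Ms i) v‖ ≤ (Real.sqrt 3 / 2) * ‖v‖ := by
  have hs3 : (Real.sqrt 3) ^ 2 = 3 := Real.sq_sqrt (by norm_num)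
  have hs3' : (0:ℝ) ≤ Real.sqrt 3 / 2 := by positivity
  have h2 : v 2 = -(v 0) - v 1 := by linarith
  have key : ‖app (Ms i) v‖^2 ≤ (Real.sqrt 3 / 2 * ‖v‖)^2 := by
    rw [mul_pow, normsq, normsq]
    have h34 : (Real.sqrt 3 / 2)^2 = 3/4 := by rw [div_pow, hs3]; norm_num
    rw [h34]
    fin_cases i <;>
      simp [app, Ms, M1, M2, M3, M4, M5, M6, Matrix.mulVec, dotProduct,
        Fin.sum_univ_three, cons_val_five] <;>
      rw [h2] <;>
      nlinarith [sq_nonneg (v 0), sq_nonneg (v 1), sq_nonneg (v 0 + v 1), sq_nonneg (v 0 - v 1)]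
  nlinarith [norm_nonneg (app (Ms i) v), norm_nonneg v, mul_nonneg hs3' (norm_nonneg v)]

lemma app_sub (A : Matrix (Fin 3) (Fin 3) ℝ) (v w : EuclideanSpace ℝ (Fin 3)) :
    app A (v - w) = app A v - app A w := by
  apply evec_ext <;>
    simp [app, Matrix.mulVec, dotProduct, Fin.sum_univ_three] <;> ring

lemma cover (t : EuclideanSpace ℝ (Fin 3)) (ht : t ∈ P) :
    ∃ i : Fin 6, ∃ s ∈ P, app (Ms i) s = t := by
  obtain ⟨h0, h1, h2, hsum⟩ := ht
  rcases le_total (t 0) (t 1) with h01 | h10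
  · rcases le_total (t 1) (t 0 + t 2) with hA | hA
    · refine ⟨0, vec (2*t 0) (2*t 1 - 2*t 0) (t 2 - t 1 + t 0), ⟨?_, ?_, ?_, ?_⟩, ?_⟩ <;>
        first
        | (simp [_root_.vec]; linarith)
        | (apply evec_ext <;>
            simp [app, Ms, M1, _root_.vec, Matrix.mulVec, dotProduct, Fin.sum_univ_three,
              cons_val_five] <;> linarith)
    · rcases le_total (t 0) (t 2) with h02 | h20
      · refine ⟨5, vec (2*t 0) (t 1 - t 2 + t 0) (2*t 2 - 2*t 0), ⟨?_, ?_, ?_, ?_⟩, ?_⟩ <;>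
          first
          | (simp [_root_.vec]; linarith)
          | (apply evec_ext <;>
              simp [app, Ms, M6, _root_.vec, Matrix.mulVec, dotProduct, Fin.sum_univ_three,
                cons_val_five] <;> linarith)
      · refine ⟨4, vec (2*t 0 - 2*t 2) (t 1 - t 0 + t 2) (2*t 2), ⟨?_, ?_, ?_, ?_⟩, ?_⟩ <;>
          first
          | (simp [_root_.vec]; linarith)
          | (apply evec_ext <;>
              simp [app, Ms, M5, _root_.vec, Matrix.mulVec, dotProduct, Fin.sum_univ_three,
                cons_val_five] <;> linarith)
  · rcases le_total (t 0) (t 1 + t 2) with hB | hB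
    · refine ⟨1, vec (2*t 0 - 2*t 1) (2*t 1) (t 2 - t 0 + t 1), ⟨?_, ?_, ?_, ?_⟩, ?_⟩ <;>
        first
        | (simp [_root_.vec]; linarith)
        | (apply evec_ext <;>
            simp [app, Ms, M2, _root_.vec, Matrix.mulVec, dotProduct, Fin.sum_univ_three,
              cons_val_five] <;> linarith)
    · rcases le_total (t 1) (t 2) with h12 | h21
      · refine ⟨2, vec (t 0 - t 2 + t 1) (2*t 1) (2*t 2 - 2*t 1), ⟨?_, ?_, ?_, ?_⟩, ?_⟩ <;>
          first
          | (simp [_root_.vec]; linarith)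
          | (apply evec_ext <;>
              simp [app, Ms, M3, _root_.vec, Matrix.mulVec, dotProduct, Fin.sum_univ_three,
                cons_val_five] <;> linarith)
      · refine ⟨3, vec (t 0 - t 1 + t 2) (2*t 1 - 2*t 2) (2*t 2), ⟨?_, ?_, ?_, ?_⟩, ?_⟩ <;>
          first
          | (simp [_root_.vec]; linarith)
          | (apply evec_ext <;>
              simp [app, Ms, M4, _root_.vec, Matrix.mulVec, dotProduct, Fin.sum_univ_three,
                cons_val_five] <;> linarith)

lemma chain (t : EuclideanSpace ℝ (Fin 3)) (ht : t ∈ P) (k : ℕ) :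
    ∃ l : List (Fin 6), l.length = k ∧ ∃ s ∈ P, app (l.map Ms).prod s = t := by
  induction k with
  | zero => exact ⟨[], rfl, t, ht, by simp [app, Matrix.one_mulVec]⟩
  | succ n ih =>
    obtain ⟨l, hl, s, hs, happ⟩ := ih
    obtain ⟨i, s', hs', happ'⟩ := cover s hs
    refine ⟨l ++ [i], by simp [hl], s', hs', ?_⟩
    rw [List.map_append, List.prod_append, List.map_singleton, List.prod_singleton]
    show WithLp.toLp 2 (((l.map Ms).prod * Ms i).mulVec s') = t
    rw [← Matrix.mulVec_mulVec]
    show app (l.map Ms).prod (app (Ms i) s') = t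
    rw [happ', happ]

lemma prod_contr (l : List (Fin 6)) (v : EuclideanSpace ℝ (Fin 3))
    (hv : v 0 + v 1 + v 2 = 0) :
    ‖app (l.map Ms).prod v‖ ≤ (Real.sqrt 3 / 2) ^ l.length * ‖v‖ ∧
      app (l.map Ms).prod v 0 + app (l.map Ms).prod v 1 + app (l.map Ms).prod v 2 = 0 := by
  induction l with
  | nil =>
    have : app ([] : List (Matrix (Fin 3) (Fin 3) ℝ)).prod v = v := by
      simp [app, Matrix.one_mulVec]
    simp only [List.map_nil, List.length_nil, pow_zero, one_mul, this]
    exact ⟨le_refl _, hv⟩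
  | cons i l ih =>
    obtain ⟨ihn, ihz⟩ := ih
    have hmv : app ((i :: l).map Ms).prod v = app (Ms i) (app (l.map Ms).prod v) := by
      show WithLp.toLp 2 ((Ms i * (l.map Ms).prod).mulVec v) = WithLp.toLp 2 ((Ms i).mulVec ((l.map Ms).prod.mulVec v))
      rw [Matrix.mulVec_mulVec]
    constructor
    · rw [hmv]
      calc ‖app (Ms i) (app (l.map Ms).prod v)‖
          ≤ (Real.sqrt 3 / 2) * ‖app (l.map Ms).prod v‖ := contr i _ ihz
        _ ≤ (Real.sqrt 3 / 2) * ((Real.sqrt 3 / 2) ^ l.length * ‖v‖) := by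
            apply mul_le_mul_of_nonneg_left ihn (by positivity)
        _ = (Real.sqrt 3 / 2) ^ (i :: l).length * ‖v‖ := by
            rw [List.length_cons, pow_succ]; ring
    · rw [hmv]
      exact sumzero i _ ihz

lemma diam (q s : EuclideanSpace ℝ (Fin 3)) (hq : q ∈ P) (hs : s ∈ P) :
    ‖q - s‖ ≤ 2 * π := by
  obtain ⟨q0, q1, q2, qsum⟩ := hq
  obtain ⟨s0, s1, s2, ssum⟩ := hs
  have hπ : 0 < π := Real.pi_pos
  have key : ‖q - s‖^2 ≤ (2*π)^2 := by
    rw [normsq]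
    have e0 : (q - s) 0 = q 0 - s 0 := by simp
    have e1 : (q - s) 1 = q 1 - s 1 := by simp
    have e2 : (q - s) 2 = q 2 - s 2 := by simp
    rw [e0, e1, e2]
    nlinarith [sq_nonneg (q 0 - s 0), sq_nonneg (q 1 - s 1), sq_nonneg (q 2 - s 2)]
  nlinarith [norm_nonneg (q - s)]

theorem stmt9 (q : EuclideanSpace ℝ (Fin 3)) (hq : q ∈ P)
    (t : EuclideanSpace ℝ (Fin 3)) (ht : t ∈ P) (ε : ℝ) (hε : 0 < ε) :
    ∃ l : List (Fin 6), ‖app (l.map Ms).prod q - t‖ < ε := by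
  have hπ : 0 < π := Real.pi_pos
  have hc1 : Real.sqrt 3 / 2 < 1 := by
    have h4 : Real.sqrt 4 = 2 := by
      rw [show (4:ℝ) = 2^2 by norm_num, Real.sqrt_sq]; norm_num
    have : Real.sqrt 3 < 2 := by
      calc Real.sqrt 3 < Real.sqrt 4 := Real.sqrt_lt_sqrt (by norm_num) (by norm_num)
        _ = 2 := h4
    linarith
  have hc0 : (0:ℝ) ≤ Real.sqrt 3 / 2 := by positivity
  obtain ⟨n, hn⟩ := exists_pow_lt_of_lt_one (show (0:ℝ) < ε / (2*π + 1) by positivity) hc1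
  obtain ⟨l, hl, s, hs, happ⟩ := chain t ht n
  refine ⟨l, ?_⟩
  have hvz : (q - s) 0 + (q - s) 1 + (q - s) 2 = 0 := by
    have e0 : (q - s) 0 = q 0 - s 0 := by simp
    have e1 : (q - s) 1 = q 1 - s 1 := by simp
    have e2 : (q - s) 2 = q 2 - s 2 := by simp
    rw [e0, e1, e2]
    have := hq.2.2.2
    have := hs.2.2.2
    linarith
  have hsub : app (l.map Ms).prod q - t = app (l.map Ms).prod (q - s) := by
    rw [app_sub, happ]
  rw [hsub]
  have hbd := (prod_contr l (q - s) hvz).1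
  have hdiam := diam q s hq hs
  have hpow : (0:ℝ) ≤ (Real.sqrt 3 / 2) ^ l.length := by positivity
  calc ‖app (l.map Ms).prod (q - s)‖
      ≤ (Real.sqrt 3 / 2) ^ l.length * ‖q - s‖ := hbd
    _ ≤ (Real.sqrt 3 / 2) ^ l.length * (2*π + 1) := by
        apply mul_le_mul_of_nonneg_left (by linarith) hpow
    _ = (Real.sqrt 3 / 2) ^ n * (2*π + 1) := by rw [hl]
    _ < (ε / (2*π + 1)) * (2*π + 1) := by
        apply mul_lt_mul_of_pos_right hn (by positivity)
    _ = ε := by field_simp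
end
end
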